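/- Let p and q be distinct odd primes, let n = p·q, and let λ = lcm(p−1, q−1). Then for every natural number m and every unit r of ZMod (n²), the Paillier ciphertext c = ((n : ZMod (n²)) + 1)^m · (r : ZMod (n²))^n satisfies c^λ = 1 + (m·λ)·(n : ZMod (n²)) in ZMod (n²), where (m·λ)·(n : ZMod (n²)) denotes the cast of the natural number m·λ·n. -/
import Mathlib

lemma binom_pow (n k : ℕ) : ((n : ZMod (n^2)) + 1) ^ k = 1 + (k : ZMod (n^2)) * n := by
  have hn2 : (n : ZMod (n^2)) * n = 0 := by
    have h : ((n*n : ℕ) : ZMod (n^2)) = 0 := by rw [← sq]; exact ZMod.natCast_self _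
    push_cast at h; exact h
  induction k with
  | zero => simp
  | succ k ih =>
    calc ((n : ZMod (n^2)) + 1) ^ (k+1) = ((n : ZMod (n^2)) + 1) ^ k * ((n : ZMod (n^2)) + 1) := pow_succ _ _
    _ = (1 + (k : ZMod (n^2)) * n) * ((n : ZMod (n^2)) + 1) := by rw [ih]
    _ = 1 + ((k:ZMod (n^2)) + 1) * n + (k : ZMod (n^2)) * ((n : ZMod (n^2)) * n) := by ring
    _ = 1 + ((k+1 : ℕ) : ZMod (n^2)) * n := by rw [hn2]; push_cast; ring

lemma crt_eq_one {a b : ℕ} (h : a.Coprime b) (x : ZMod (a*b))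
    (ha : ZMod.castHom (dvd_mul_right a b) (ZMod a) x = 1)
    (hb : ZMod.castHom (dvd_mul_left b a) (ZMod b) x = 1) : x = 1 := by
  apply (ZMod.chineseRemainder h).injective
  have e1 : (ZMod.chineseRemainder h) x = (ZMod.cast x, ZMod.cast x) := by
    ext <;> simp [ZMod.chineseRemainder, ZMod.castHom_apply]
  rw [e1, map_one]
  simp only [ZMod.castHom_apply] at ha hb
  exact Prod.ext ha hb

lemma unit_pow_aux (p q : ℕ) (hp : Nat.Prime p) (hq : Nat.Prime q) (hpq : p ≠ q)
    (u : (ZMod (p^2*q^2))ˣ) :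
    u ^ (p * q * Nat.lcm (p - 1) (q - 1)) = 1 := by
  have hco : (p^2).Coprime (q^2) := Nat.Coprime.pow 2 2 ((Nat.coprime_primes hp hq).mpr hpq)
  apply Units.ext
  rw [Units.val_pow_eq_pow_val, Units.val_one]
  apply crt_eq_one hco
  · -- ZMod (p^2)
    haveI : NeZero (p^2) := ⟨pow_ne_zero _ hp.pos.ne'⟩
    set f := (ZMod.castHom (dvd_mul_right (p^2) (q^2)) (ZMod (p^2)))
    have : f ((u : ZMod (p^2*q^2)) ^ (p * q * Nat.lcm (p-1) (q-1)))
        = ((Units.map f.toMonoidHom u : (ZMod (p^2))ˣ) : ZMod (p^2)) ^ (p * q * Nat.lcm (p-1) (q-1)) := by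
      rw [map_pow]; rfl
    rw [this, ← Units.val_pow_eq_pow_val]
    have hdvd : orderOf (Units.map f.toMonoidHom u) ∣ p * q * Nat.lcm (p-1) (q-1) := by
      refine dvd_trans (orderOf_dvd_card) ?_
      rw [ZMod.card_units_eq_totient, Nat.totient_prime_pow hp (by norm_num)]
      calc p ^ 1 * (p - 1) = p * (p-1) := by ring
      _ ∣ p * q * Nat.lcm (p-1) (q-1) := by
        rw [mul_comm p q, mul_assoc]
        exact Dvd.dvd.mul_left (mul_dvd_mul_left p (Nat.dvd_lcm_left _ _)) q
    rw [orderOf_dvd_iff_pow_eq_one.mp hdvd, Units.val_one]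
  · haveI : NeZero (q^2) := ⟨pow_ne_zero _ hq.pos.ne'⟩
    set f := (ZMod.castHom (dvd_mul_left (q^2) (p^2)) (ZMod (q^2)))
    have : f ((u : ZMod (p^2*q^2)) ^ (p * q * Nat.lcm (p-1) (q-1)))
        = ((Units.map f.toMonoidHom u : (ZMod (q^2))ˣ) : ZMod (q^2)) ^ (p * q * Nat.lcm (p-1) (q-1)) := by
      rw [map_pow]; rfl
    rw [this, ← Units.val_pow_eq_pow_val]
    have hdvd : orderOf (Units.map f.toMonoidHom u) ∣ p * q * Nat.lcm (p-1) (q-1) := by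
      refine dvd_trans (orderOf_dvd_card) ?_
      rw [ZMod.card_units_eq_totient, Nat.totient_prime_pow hq (by norm_num)]
      calc q ^ 1 * (q - 1) = q * (q-1) := by ring
      _ ∣ p * q * Nat.lcm (p-1) (q-1) := by
        rw [mul_assoc]
        exact Dvd.dvd.mul_left (mul_dvd_mul_left q (Nat.dvd_lcm_right _ _)) p
    rw [orderOf_dvd_iff_pow_eq_one.mp hdvd, Units.val_one]
theorem paillier_decryption_eq (p q : ℕ) (hp : Nat.Prime p) (hq : Nat.Prime q)
    (hp2 : Odd p) (hq2 : Odd q) (hpq : p ≠ q)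
    (n l : ℕ) (hn : n = p * q) (hl : l = Nat.lcm (p - 1) (q - 1))
    (m : ℕ) (r : (ZMod (n ^ 2))ˣ) :
    (((n : ZMod (n ^ 2)) + 1) ^ m * ((r : ZMod (n ^ 2)) ^ n)) ^ l =
      1 + ((m * l * n : ℕ) : ZMod (n ^ 2)) := by
  subst hn hl
  have key : ∀ (u : (ZMod ((p*q) ^ 2))ˣ),
      (u : ZMod ((p*q) ^ 2)) ^ (p * q * Nat.lcm (p - 1) (q - 1)) = 1 := by
    rw [show (p*q)^2 = p^2*q^2 by ring]
    intro u
    have h := unit_pow_aux p q hp hq hpq u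
    calc (u : ZMod (p^2*q^2)) ^ (p * q * Nat.lcm (p - 1) (q - 1))
        = ((u ^ (p * q * Nat.lcm (p - 1) (q - 1)) : (ZMod (p^2*q^2))ˣ) : ZMod (p^2*q^2)) := by
          rw [Units.val_pow_eq_pow_val]
    _ = 1 := by rw [h, Units.val_one]
  simp only [mul_pow, ← pow_mul]
  rw [key r, mul_one, binom_pow]
  push_cast
  ring
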